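/- A densely defined sesquilinear form Ω on a subspace D of a Hilbert space H is q-closable if and only if it admits a q-closed extension. -/

import Mathlib

noncomputable section

open Filter Topology Function
open scoped InnerProductSpace

namespace Paper

variable {V : Type} [AddCommGroup V] [Module ℂ V]

/-- `n` is a norm on the complex vector space `V`. -/
def IsNormFn (n : V → ℝ) : Prop :=
  (∀ x : V, n x = 0 ↔ x = 0) ∧
    (∀ (c : ℂ) (x : V), n (c • x) = ‖c‖ * n x) ∧
      ∀ x y : V, n (x + y) ≤ n x + n y

/-- `ξ` is a Cauchy sequence with respect to the norm `n`. -/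
def IsCauchyWrt (n : V → ℝ) (ξ : ℕ → V) : Prop :=
  ∀ ε : ℝ, 0 < ε → ∃ N : ℕ, ∀ p q : ℕ, N ≤ p → N ≤ q → n (ξ p - ξ q) < ε

/-- `ξ` tends to `x` with respect to the norm `n`. -/
def TendstoWrt (n : V → ℝ) (ξ : ℕ → V) (x : V) : Prop :=
  Tendsto (fun k => n (ξ k - x)) atTop (𝓝 0)

/-- `V` is complete with respect to the norm `n`. -/
def CompleteWrt (n : V → ℝ) : Prop :=
  ∀ ξ : ℕ → V, IsCauchyWrt n ξ → ∃ x : V, TendstoWrt n ξ x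

/-- The two norms `n₁` and `n₂` are equivalent. -/
def EquivNorms (n₁ n₂ : V → ℝ) : Prop :=
  ∃ c₁ : ℝ, 0 < c₁ ∧ ∃ c₂ : ℝ, 0 < c₂ ∧ ∀ x : V, n₁ x ≤ c₁ * n₂ x ∧ n₂ x ≤ c₂ * n₁ x

/-- `Ω` is a sesquilinear form: linear in the first entry, conjugate-linear in the second. -/
def IsSesq (Ω : V → V → ℂ) : Prop :=
  (∀ η : V, IsLinearMap ℂ fun ξ => Ω ξ η) ∧
    ∀ ξ : V, IsLinearMap ℂ fun η => (starRingEnd ℂ) (Ω ξ η)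

/-- `T` is a positive form: `T(ξ,ξ) ≥ 0` for every `ξ`. -/
def IsPositiveForm (T : V → V → ℂ) : Prop :=
  ∀ x : V, (T x x).im = 0 ∧ 0 ≤ (T x x).re

/-- The norm `n` is compatible with the positive sesquilinear form `T`. -/
def CompatibleWithForm (T : V → V → ℂ) (n : V → ℝ) : Prop :=
  (∃ α : ℝ, 0 < α ∧ ∀ ξ : V, (T ξ ξ).re ≤ α * n ξ ^ 2) ∧
    ∀ ξ : ℕ → V, Tendsto (fun k => (T (ξ k) (ξ k)).re) atTop (𝓝 0) →
      IsCauchyWrt n ξ → Tendsto (fun k => n (ξ k)) atTop (𝓝 0)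

/-- A realization of `(V, n)` as a dense subspace of a reflexive Banach space `E`. -/
structure BanachModel (V : Type) [AddCommGroup V] [Module ℂ V] (n : V → ℝ) : Type 1 where
  E : Type
  [instGroup : NormedAddCommGroup E]
  [instSpace : NormedSpace ℂ E]
  [instComplete : CompleteSpace E]
  j : V →ₗ[ℂ] E
  isometry : ∀ x : V, ‖j x‖ = n x
  dense : DenseRange j
  reflexive : Surjective (NormedSpace.inclusionInDoubleDual ℂ E)

/-- `V` endowed with the norm `n` is a reflexive Banach space. -/
def IsReflexiveBanachWrt (n : V → ℝ) : Prop :=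
  ∃ M : BanachModel V n, Surjective M.j

/-- The completion of `V` with respect to the norm `n` is a reflexive Banach space. -/
def CompletionIsReflexiveBanach (n : V → ℝ) : Prop :=
  Nonempty (BanachModel V n)

variable {H : Type} [NormedAddCommGroup H] [InnerProductSpace ℂ H]

/-- The embedding of `D[n]` into `H` is continuous. -/
def EmbedsContinuously (D : Submodule ℂ H) (n : D → ℝ) : Prop :=
  ∃ α : ℝ, 0 < α ∧ ∀ ξ : D, ‖(ξ : H)‖ ≤ α * n ξ

/-- The norm `n` on `D` is compatible with the inner product of `H`. -/
def CompatibleWithInner (D : Submodule ℂ H) (n : D → ℝ) : Prop :=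
  EmbedsContinuously D n ∧
    ∀ ξ : ℕ → D, Tendsto (fun k => ‖(ξ k : H)‖) atTop (𝓝 0) →
      IsCauchyWrt n ξ → Tendsto (fun k => n (ξ k)) atTop (𝓝 0)

/-- The form `Ω` is bounded on `D[n]`. -/
def BoundedOn (D : Submodule ℂ H) (Ω : D → D → ℂ) (n : D → ℝ) : Prop :=
  ∃ β : ℝ, 0 < β ∧ ∀ ξ η : D, ‖Ω ξ η‖ ≤ β * n ξ * n η

/-- `Ω` is q-closed with respect to the norm `n` (Definition 5.2 of Di Bella–Trapani). -/
def IsQClosed (D : Submodule ℂ H) (Ω : D → D → ℂ) (n : D → ℝ) : Prop :=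
  IsNormFn n ∧ CompatibleWithInner D n ∧ IsReflexiveBanachWrt n ∧ BoundedOn D Ω n

/-- `Ω` is q-closable with respect to the norm `n`. -/
def IsQClosable (D : Submodule ℂ H) (Ω : D → D → ℂ) (n : D → ℝ) : Prop :=
  IsNormFn n ∧ CompatibleWithInner D n ∧ CompletionIsReflexiveBanach n ∧ BoundedOn D Ω n

/-- `Λ` is a bounded conjugate-linear functional on `D[n]`,
i.e. an element of the conjugate dual of `D[n]`. -/
def MemConjDual (D : Submodule ℂ H) (n : D → ℝ) (Λ : D → ℂ) : Prop :=
  (∀ x y : D, Λ (x + y) = Λ x + Λ y) ∧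
    (∀ (c : ℂ) (x : D), Λ (c • x) = (starRingEnd ℂ) c * Λ x) ∧
      ∃ C : ℝ, ∀ x : D, ‖Λ x‖ ≤ C * n x

/-- `Υ` is a bounded sesquilinear form on `H`. -/
def IsBoundedForm (Υ : H → H → ℂ) : Prop :=
  IsSesq Υ ∧ ∃ C : ℝ, ∀ x y : H, ‖Υ x y‖ ≤ C * ‖x‖ * ‖y‖

/-- `Υ ∈ P₀(Ω)`: `N(Ω+Υ) = {0}` and every element of the conjugate dual of `D[n]`
is represented by `Ω+Υ`. -/
def InP0 (D : Submodule ℂ H) (Ω : D → D → ℂ) (n : D → ℝ) (Υ : H → H → ℂ) : Prop :=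
  (∀ ξ : D, (∀ η : D, Ω ξ η + Υ ↑ξ ↑η = 0) → ξ = 0) ∧
    ∀ Λ : D → ℂ, MemConjDual D n Λ → ∃ ξ : D, ∀ η : D, Λ η = Ω ξ η + Υ ↑ξ ↑η

/-- `Ω` is solvable with respect to the norm `n`. -/
def IsSolvable (D : Submodule ℂ H) (Ω : D → D → ℂ) (n : D → ℝ) : Prop :=
  IsQClosed D Ω n ∧ ∃ Υ : H → H → ℂ, IsBoundedForm Υ ∧ InP0 D Ω n Υ

/-- The numerical range of a form on `D`. -/
def NumRangeForm (D : Submodule ℂ H) (Ω : D → D → ℂ) : Set ℂ :=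
  {z : ℂ | ∃ ξ : D, ‖(ξ : H)‖ = 1 ∧ z = Ω ξ ξ}

/-- The numerical range of a form on `H`. -/
def NumRangeFormH (Υ : H → H → ℂ) : Set ℂ :=
  {z : ℂ | ∃ x : H, ‖x‖ = 1 ∧ z = Υ x x}

/-- `sup { |Θ(ξ,η)| : ‖η‖_Ω = 1 }`. -/
def FormSup (D : Submodule ℂ H) (Θ : D → D → ℂ) (n : D → ℝ) (ξ : D) : ℝ :=
  sSup {r : ℝ | ∃ η : D, n η = 1 ∧ r = ‖Θ ξ η‖}

end Paper

namespace Paper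

open NormedSpace

lemma norm_le_of_dense {E F : Type*} [NormedAddCommGroup E] [NormedAddCommGroup F]
    {g : E → F} (hg : Continuous g) {s : Set E} (hs : Dense s) {C : ℝ}
    (h : ∀ x ∈ s, ‖g x‖ ≤ C * ‖x‖) (x : E) : ‖g x‖ ≤ C * ‖x‖ := by
  have hcl : IsClosed {x : E | ‖g x‖ ≤ C * ‖x‖} :=
    isClosed_le hg.norm (continuous_const.mul continuous_norm)
  have h2 : closure s ⊆ {x : E | ‖g x‖ ≤ C * ‖x‖} :=
    hcl.closure_subset_iff.2 (fun y hy => h y hy)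
  exact h2 (by rw [hs.closure_eq]; trivial)

lemma IsNormFn.nonneg {V : Type} [AddCommGroup V] [Module ℂ V] {n : V → ℝ}
    (hn : IsNormFn n) (x : V) : 0 ≤ n x := by
  have hneg : n (-x) = n x := by
    have := hn.2.1 (-1) x
    simpa using this
  have h0 : n 0 = 0 := (hn.1 0).2 rfl
  have := hn.2.2 x (-x)
  rw [add_neg_cancel, h0, hneg] at this
  linarith

set_option maxHeartbeats 1000000 in
lemma forward_dir {H : Type} [NormedAddCommGroup H] [InnerProductSpace ℂ H] [CompleteSpace H]
    (D : Submodule ℂ H) (Ω : ↥D → ↥D → ℂ) (hsesq : IsSesq Ω)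
    (n : ↥D → ℝ) (h : IsQClosable D Ω n) :
    ∃ (D' : Submodule ℂ H) (hle : D ≤ D') (Ω' : ↥D' → ↥D' → ℂ) (n' : ↥D' → ℝ),
        IsSesq Ω' ∧
        (∀ ξ η : ↥D, Ω' (Submodule.inclusion hle ξ) (Submodule.inclusion hle η) = Ω ξ η) ∧
        IsQClosed D' Ω' n' := by
  obtain ⟨hn, hci, ⟨M⟩, hb⟩ := h
  letI := M.instGroup; letI := M.instSpace; letI := M.instComplete
  obtain ⟨β, hβ, hΩb⟩ := hb
  obtain ⟨α, hα, hemb⟩ := hci.1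
  -- injectivity of M.j
  have hjinj : Function.Injective ⇑M.j := by
    intro a b hab
    have h1 : ‖M.j (a - b)‖ = 0 := by rw [map_sub, hab, sub_self, norm_zero]
    rw [M.isometry] at h1
    have := (hn.1 _).1 h1
    exact sub_eq_zero.mp this
  set p : Submodule ℂ M.E := LinearMap.range M.j with hp
  set jE : ↥D ≃ₗ[ℂ] ↥p := LinearEquiv.ofInjective M.j hjinj with hjEdef
  have hjE : ∀ ξ : ↥D, (jE ξ : M.E) = M.j ξ := fun ξ => LinearEquiv.ofInjective_apply _ _
  have hjEs : ∀ y : ↥p, M.j (jE.symm y) = (y : M.E) := by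
    intro y
    rw [← hjE, jE.apply_symm_apply]
  have hn_val : ∀ y : ↥p, n (jE.symm y) = ‖y‖ := by
    intro y
    rw [← M.isometry, hjEs]
    rfl
  set e : ↥p →L[ℂ] M.E := p.subtypeL with he
  have hp_dense : Dense (p : Set M.E) := by
    have : (p : Set M.E) = Set.range ⇑M.j := LinearMap.coe_range _
    rw [this]; exact M.dense
  have he_dense : DenseRange ⇑e := by
    have : Set.range ⇑e = (p : Set M.E) := Subtype.range_coe
    unfold DenseRange
    rw [this]; exact hp_dense
  have he_ui : IsUniformInducing ⇑e := isometry_subtype_coe.isUniformInducing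
  -- the map back to H
  set g : ↥p →ₗ[ℂ] H := D.subtype ∘ₗ (jE.symm : ↥p →ₗ[ℂ] ↥D) with hg
  have hgapp : ∀ y : ↥p, g y = ((jE.symm y : ↥D) : H) := fun y => rfl
  have hgb : ∀ y : ↥p, ‖g y‖ ≤ α * ‖y‖ := by
    intro y
    rw [hgapp]
    calc ‖((jE.symm y : ↥D) : H)‖ ≤ α * n (jE.symm y) := hemb _
      _ = α * ‖y‖ := by rw [hn_val]
  set f : ↥p →L[ℂ] H := g.mkContinuous α hgb with hf
  set jhat : M.E →L[ℂ] H := f.extend e with hjhatdef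
  have hjhat : ∀ ξ : ↥D, jhat (M.j ξ) = (ξ : H) := by
    intro ξ
    have h1 : M.j ξ = e (jE ξ) := (hjE ξ).symm
    rw [h1, ContinuousLinearMap.extend_eq _ he_dense he_ui]
    show g (jE ξ) = (ξ : H)
    rw [hgapp, jE.symm_apply_apply]
  have hjhatb : ∀ z : M.E, ‖jhat z‖ ≤ α * ‖z‖ := by
    refine norm_le_of_dense jhat.continuous hp_dense ?_
    intro x hx
    have h1 : (⟨x, hx⟩ : ↥p) = e ⟨x, hx⟩ := rfl
    have h2 : jhat x = f ⟨x, hx⟩ := by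
      show jhat ((⟨x, hx⟩ : ↥p) : M.E) = f ⟨x, hx⟩
      rw [h1, ContinuousLinearMap.extend_eq _ he_dense he_ui]
    rw [h2]
    exact hgb ⟨x, hx⟩
  -- injectivity of jhat
  have hker : ∀ x, jhat x = 0 → x = 0 := by
    intro x hx0
    have hxcl : x ∈ closure (Set.range ⇑M.j) := M.dense x
    rw [mem_closure_iff_seq_limit] at hxcl
    obtain ⟨u, hu_mem, hu_lim⟩ := hxcl
    choose ξ hξ using hu_mem
    have hueq : u = fun k => M.j (ξ k) := funext (fun k => (hξ k).symm)
    have hcauchy : IsCauchyWrt n ξ := by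
      have hC : CauchySeq u := hu_lim.cauchySeq
      intro ε hε
      obtain ⟨N, hN⟩ := Metric.cauchySeq_iff.mp hC ε hε
      refine ⟨N, fun a b ha hb => ?_⟩
      have := hN a ha b hb
      rw [dist_eq_norm, hueq] at this
      calc n (ξ a - ξ b) = ‖M.j (ξ a - ξ b)‖ := (M.isometry _).symm
        _ = ‖M.j (ξ a) - M.j (ξ b)‖ := by rw [map_sub]
        _ < ε := this
    have hH0 : Tendsto (fun k => ‖((ξ k : ↥D) : H)‖) atTop (𝓝 0) := by
      have h1 : Tendsto (fun k => jhat (u k)) atTop (𝓝 (jhat x)) :=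
        (jhat.continuous.tendsto x).comp hu_lim
      rw [hx0] at h1
      have h2 : (fun k => jhat (u k)) = fun k => ((ξ k : ↥D) : H) := by
        funext k; rw [← hξ k, hjhat]
      rw [h2] at h1
      simpa using h1.norm
    have hn0 : Tendsto (fun k => n (ξ k)) atTop (𝓝 0) := hci.2 ξ hH0 hcauchy
    have hu0 : Tendsto u atTop (𝓝 0) := by
      rw [hueq]
      rw [tendsto_zero_iff_norm_tendsto_zero]
      simpa [M.isometry] using hn0
    exact tendsto_nhds_unique hu_lim hu0
  have hjhat_inj : Function.Injective ⇑jhat := by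
    intro a b hab
    exact sub_eq_zero.mp (hker (a - b) (by rw [map_sub, hab, sub_self]))
  -- D' and the equivalence
  set D' : Submodule ℂ H := LinearMap.range (jhat.toLinearMap) with hD'
  have hle : D ≤ D' := by
    intro x hx
    exact ⟨M.j ⟨x, hx⟩, hjhat ⟨x, hx⟩⟩
  set eqv : M.E ≃ₗ[ℂ] ↥D' := LinearEquiv.ofInjective jhat.toLinearMap hjhat_inj with heqvdef
  have heqv : ∀ u : M.E, ((eqv u : ↥D') : H) = jhat u := fun u => LinearEquiv.ofInjective_apply _ _
  have hcoe_eqv : ∀ x : ↥D', jhat (eqv.symm x) = (x : H) := by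
    intro x
    rw [← heqv, eqv.apply_symm_apply]
  set n' : ↥D' → ℝ := fun x => ‖eqv.symm x‖ with hn'def
  -- second-variable semilinearity of Ω
  have hΩ_add2 : ∀ (ξ η₁ η₂ : ↥D), Ω ξ (η₁ + η₂) = Ω ξ η₁ + Ω ξ η₂ := by
    intro ξ η₁ η₂
    have h2 := (hsesq.2 ξ).map_add η₁ η₂
    have := congrArg (starRingEnd ℂ) h2
    simpa using this
  have hΩ_smul2 : ∀ (ξ : ↥D) (a : ℂ) (η : ↥D), Ω ξ (a • η) = (starRingEnd ℂ) a * Ω ξ η := by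
    intro ξ a η
    have h2 := (hsesq.2 ξ).map_smul a η
    have := congrArg (starRingEnd ℂ) h2
    simpa [map_mul] using this
  -- F : first step, fixed ξ, functional on p
  have hFb : ∀ (ξ : ↥D) (y : ↥p), ‖Ω ξ (jE.symm y)‖ ≤ β * n ξ * ‖y‖ := by
    intro ξ y
    calc ‖Ω ξ (jE.symm y)‖ ≤ β * n ξ * n (jE.symm y) := hΩb _ _
      _ = β * n ξ * ‖y‖ := by rw [hn_val]
  set F : ↥D → (↥p →SL[starRingEnd ℂ] ℂ) := fun ξ =>
    LinearMap.mkContinuous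
      { toFun := fun y => Ω ξ (jE.symm y)
        map_add' := fun y z => by
          show Ω ξ (jE.symm (y + z)) = Ω ξ (jE.symm y) + Ω ξ (jE.symm z)
          rw [map_add, hΩ_add2]
        map_smul' := fun a y => by
          show Ω ξ (jE.symm (a • y)) = (starRingEnd ℂ) a • Ω ξ (jE.symm y)
          rw [map_smul, hΩ_smul2]
          rfl }
      (β * n ξ) (hFb ξ) with hFdef
  have hFapp : ∀ (ξ : ↥D) (y : ↥p), F ξ y = Ω ξ (jE.symm y) := fun ξ y => rfl
  set G : ↥D → (M.E →SL[starRingEnd ℂ] ℂ) := fun ξ => (F ξ).extend e with hGdef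
  have hGeq : ∀ (ξ : ↥D) (y : ↥p), G ξ (y : M.E) = F ξ y := by
    intro ξ y
    have : (y : M.E) = e y := rfl
    rw [this, ContinuousLinearMap.extend_eq _ he_dense he_ui]
  have hGb : ∀ (ξ : ↥D) (z : M.E), ‖G ξ z‖ ≤ β * n ξ * ‖z‖ := by
    intro ξ
    refine norm_le_of_dense (G ξ).continuous hp_dense ?_
    intro x hx
    have : G ξ x = F ξ ⟨x, hx⟩ := hGeq ξ ⟨x, hx⟩
    rw [this, hFapp]
    exact hFb ξ ⟨x, hx⟩
  have hGadd : ∀ ξ₁ ξ₂ : ↥D, G (ξ₁ + ξ₂) = G ξ₁ + G ξ₂ := by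
    intro ξ₁ ξ₂
    refine (ContinuousLinearMap.extend_unique _ he_dense he_ui _ ?_)
    ext y
    show G ξ₁ (e y) + G ξ₂ (e y) = F (ξ₁ + ξ₂) y
    have h1 : e y = (y : M.E) := rfl
    rw [h1, hGeq, hGeq, hFapp, hFapp, hFapp]
    exact ((hsesq.1 (jE.symm y)).map_add ξ₁ ξ₂).symm
  have hGsmul : ∀ (a : ℂ) (ξ : ↥D), G (a • ξ) = a • G ξ := by
    intro a ξ
    refine (ContinuousLinearMap.extend_unique _ he_dense he_ui _ ?_)
    ext y
    show a • (G ξ (e y)) = F (a • ξ) y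
    have h1 : e y = (y : M.E) := rfl
    rw [h1, hGeq, hFapp, hFapp]
    have := (hsesq.1 (jE.symm y)).map_smul a ξ
    rw [this]
  set K' : ↥p →ₗ[ℂ] (M.E →SL[starRingEnd ℂ] ℂ) :=
    { toFun := fun y => G (jE.symm y)
      map_add' := fun y z => by
        show G (jE.symm (y + z)) = G (jE.symm y) + G (jE.symm z)
        rw [map_add, hGadd]
      map_smul' := fun a y => by
        show G (jE.symm (a • y)) = a • G (jE.symm y)
        rw [map_smul, hGsmul] } with hK'def
  have hK'b : ∀ y : ↥p, ‖K' y‖ ≤ β * ‖y‖ := by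
    intro y
    refine ContinuousLinearMap.opNorm_le_bound _ (mul_nonneg hβ.le (norm_nonneg y)) ?_
    intro z
    calc ‖G (jE.symm y) z‖ ≤ β * n (jE.symm y) * ‖z‖ := hGb _ _
      _ = β * ‖y‖ * ‖z‖ := by rw [hn_val]
  set K'' : ↥p →L[ℂ] (M.E →SL[starRingEnd ℂ] ℂ) := K'.mkContinuous β hK'b with hK''def
  set B : M.E →L[ℂ] (M.E →SL[starRingEnd ℂ] ℂ) := K''.extend e with hBdef
  have hBeq : ∀ y : ↥p, B (y : M.E) = G (jE.symm y) := by
    intro y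
    have : (y : M.E) = e y := rfl
    rw [this, ContinuousLinearMap.extend_eq _ he_dense he_ui]
    rfl
  have hBop : ∀ u : M.E, ‖B u‖ ≤ β * ‖u‖ := by
    refine norm_le_of_dense B.continuous hp_dense ?_
    intro x hx
    have h1 : B x = G (jE.symm ⟨x, hx⟩) := hBeq ⟨x, hx⟩
    rw [h1]
    refine ContinuousLinearMap.opNorm_le_bound _ (mul_nonneg hβ.le (norm_nonneg x)) ?_
    intro z
    calc ‖G (jE.symm ⟨x, hx⟩) z‖ ≤ β * n (jE.symm ⟨x, hx⟩) * ‖z‖ := hGb _ _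
      _ = β * ‖x‖ * ‖z‖ := by rw [hn_val]; rfl
  set Ω' : ↥D' → ↥D' → ℂ := fun x y => B (eqv.symm x) (eqv.symm y) with hΩ'def
  -- restriction property
  have hsymm_inc : ∀ ξ : ↥D, eqv.symm (Submodule.inclusion hle ξ) = M.j ξ := by
    intro ξ
    apply eqv.injective
    rw [eqv.apply_symm_apply]
    apply Subtype.ext
    rw [heqv, hjhat]
    rfl
  have hrest : ∀ ξ η : ↥D, Ω' (Submodule.inclusion hle ξ) (Submodule.inclusion hle η) = Ω ξ η := by
    intro ξ η
    show B (eqv.symm _) (eqv.symm _) = Ω ξ η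
    rw [hsymm_inc, hsymm_inc]
    have h1 : M.j ξ = ((jE ξ : ↥p) : M.E) := (hjE ξ).symm
    have h2 : M.j η = ((jE η : ↥p) : M.E) := (hjE η).symm
    rw [h1, h2, hBeq, jE.symm_apply_apply, hGeq, hFapp, jE.symm_apply_apply]
  clear_value F G K' K'' f g B jhat eqv
  refine ⟨D', hle, Ω', n', ⟨?_, ?_⟩, hrest, ⟨?_, ?_, ?_⟩, ⟨?_, ?_⟩, ?_, ?_⟩
  · -- linear in first argument
    intro y
    constructor
    · intro x₁ x₂
      show B (eqv.symm (x₁ + x₂)) _ = B (eqv.symm x₁) _ + B (eqv.symm x₂) _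
      rw [map_add, map_add]
      rfl
    · intro c x
      show B (eqv.symm (c • x)) _ = c • B (eqv.symm x) _
      rw [map_smul, map_smul]
      rfl
  · -- conj-linear in second argument
    intro x
    constructor
    · intro y₁ y₂
      show (starRingEnd ℂ) (B _ (eqv.symm (y₁ + y₂))) = _
      rw [map_add, map_add, map_add]
    · intro c y
      show (starRingEnd ℂ) (B _ (eqv.symm (c • y))) = c • (starRingEnd ℂ) (B _ (eqv.symm y))
      rw [map_smul, ContinuousLinearMap.map_smulₛₗ]
      simp [mul_comm]
  · -- IsNormFn n'
    intro x
    show ‖eqv.symm x‖ = 0 ↔ x = 0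
    rw [norm_eq_zero]
    constructor
    · intro hx
      have := congrArg eqv hx
      rwa [eqv.apply_symm_apply, map_zero] at this
    · rintro rfl; rw [map_zero]
  · intro c x
    show ‖eqv.symm (c • x)‖ = ‖c‖ * ‖eqv.symm x‖
    rw [map_smul, norm_smul]
  · intro x y
    show ‖eqv.symm (x + y)‖ ≤ ‖eqv.symm x‖ + ‖eqv.symm y‖
    rw [map_add]
    exact norm_add_le _ _
  · -- EmbedsContinuously
    refine ⟨α, hα, ?_⟩
    intro x
    rw [← hcoe_eqv x]
    exact hjhatb (eqv.symm x)
  · -- compatibility sequences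
    intro ξ h1 h2
    set u : ℕ → M.E := fun k => eqv.symm (ξ k) with hu
    have hC : CauchySeq u := by
      rw [Metric.cauchySeq_iff]
      intro ε hε
      obtain ⟨N, hN⟩ := h2 ε hε
      refine ⟨N, fun a ha b hb => ?_⟩
      have := hN a b ha hb
      have heq : n' (ξ a - ξ b) = dist (u a) (u b) := by
        rw [dist_eq_norm]
        show ‖eqv.symm (ξ a - ξ b)‖ = _
        rw [map_sub]
      rwa [heq] at this
    obtain ⟨x, hx⟩ := cauchySeq_tendsto_of_complete hC
    have h3 : Tendsto (fun k => jhat (u k)) atTop (𝓝 (jhat x)) :=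
      (jhat.continuous.tendsto x).comp hx
    have h4 : (fun k => jhat (u k)) = fun k => ((ξ k : ↥D') : H) := by
      funext k; exact hcoe_eqv (ξ k)
    rw [h4] at h3
    have h5 : Tendsto (fun k => ((ξ k : ↥D') : H)) atTop (𝓝 0) :=
      tendsto_zero_iff_norm_tendsto_zero.mpr h1
    have hx0 : jhat x = 0 := tendsto_nhds_unique h3 h5
    have : x = 0 := hker x hx0
    rw [this] at hx
    have heqn : (fun k => n' (ξ k)) = fun k => ‖u k‖ := rfl
    rw [heqn]
    simpa using hx.norm
  · -- IsReflexiveBanachWrt n'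
    refine ⟨{ E := M.E, j := (eqv.symm : ↥D' →ₗ[ℂ] M.E),
              isometry := fun x => rfl,
              dense := eqv.symm.surjective.denseRange,
              reflexive := M.reflexive }, eqv.symm.surjective⟩
  · -- BoundedOn
    refine ⟨β, hβ, ?_⟩
    intro x y
    calc ‖B (eqv.symm x) (eqv.symm y)‖ ≤ ‖B (eqv.symm x)‖ * ‖eqv.symm y‖ :=
          ContinuousLinearMap.le_opNorm _ _
      _ ≤ β * ‖eqv.symm x‖ * ‖eqv.symm y‖ :=
          mul_le_mul_of_nonneg_right (hBop _) (norm_nonneg _)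


lemma reflexive_closedSubspace {E : Type} [NormedAddCommGroup E] [NormedSpace ℂ E]
    (href : Surjective (inclusionInDoubleDual ℂ E))
    (S : Submodule ℂ E) (hS : IsClosed (S : Set E)) :
    Surjective (inclusionInDoubleDual ℂ ↥S) := by
  intro Φ
  set i : ↥S →L[ℂ] E := S.subtypeL with hi
  set T : StrongDual ℂ E →L[ℂ] StrongDual ℂ ↥S := (ContinuousLinearMap.compL ℂ ↥S E ℂ).flip i with hT
  have hTapp : ∀ (f : StrongDual ℂ E) (y : ↥S), T f y = f ↑y := fun f y => rfl
  obtain ⟨x, hx⟩ := href (Φ.comp T)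
  have hx' : ∀ f : StrongDual ℂ E, f x = Φ (T f) := by
    intro f
    have := congrFun (congrArg (fun (g : StrongDual ℂ (StrongDual ℂ E)) => (g : StrongDual ℂ E → ℂ)) hx) f
    simpa [dual_def] using this
  have hxS : x ∈ S := by
    by_contra hxS
    haveI : IsClosed (S : Set E) := hS
    have hπx : (Submodule.Quotient.mk x : E ⧸ S) ≠ 0 := by
      simpa [Submodule.Quotient.mk_eq_zero] using hxS
    obtain ⟨g, -, hg2⟩ := exists_dual_vector ℂ _ (norm_ne_zero_iff.mpr hπx)
    set πL : E →L[ℂ] (E ⧸ S) :=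
      S.mkQ.mkContinuous 1 (fun m => by simpa using Submodule.Quotient.norm_mk_le S m) with hπL
    have hTg : T (g.comp πL) = 0 := by
      ext y
      have h0 : (Submodule.Quotient.mk (y : E) : E ⧸ S) = 0 := (Submodule.Quotient.mk_eq_zero S).2 y.2
      have : T (g.comp πL) y = g (Submodule.Quotient.mk (y : E)) := rfl
      rw [this, h0]
      simp
    have h1 : (g.comp πL) x = 0 := by rw [hx' (g.comp πL), hTg]; simp
    have : g (Submodule.Quotient.mk x) = 0 := h1
    rw [hg2] at this
    exact hπx (norm_eq_zero.mp (RCLike.ofReal_eq_zero.mp this))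
  refine ⟨⟨x, hxS⟩, ?_⟩
  ext g
  obtain ⟨gext, hgext, -⟩ := exists_extension_norm_eq S g
  have hTgext : T gext = g := by ext y; simp [hTapp, hgext]
  have := hx' gext
  rw [hTgext] at this
  simp only [dual_def]
  rw [← this]
  exact (hgext ⟨x, hxS⟩).symm

lemma backward_dir {H : Type} [NormedAddCommGroup H] [InnerProductSpace ℂ H] [CompleteSpace H]
    (D : Submodule ℂ H) (Ω : ↥D → ↥D → ℂ)
    (D' : Submodule ℂ H) (hle : D ≤ D') (Ω' : ↥D' → ↥D' → ℂ) (n' : ↥D' → ℝ)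
    (hrest : ∀ ξ η : ↥D, Ω' (Submodule.inclusion hle ξ) (Submodule.inclusion hle η) = Ω ξ η)
    (hQ : IsQClosed D' Ω' n') : ∃ n : ↥D → ℝ, IsQClosable D Ω n := by
  obtain ⟨hn', hci', hrb', hb'⟩ := hQ
  set inc : ↥D →ₗ[ℂ] ↥D' := Submodule.inclusion hle with hinc
  have hcoe : ∀ ξ : ↥D, ((inc ξ : ↥D') : H) = (ξ : H) := fun ξ => rfl
  refine ⟨fun ξ => n' (inc ξ), ⟨?_, ?_, ?_⟩, ⟨?_, ?_⟩, ?_, ?_⟩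
  · -- zero iff
    intro x
    rw [hn'.1 (inc x)]
    constructor
    · intro h
      have : ((inc x : ↥D') : H) = 0 := by rw [h]; rfl
      exact Subtype.ext (by rw [← hcoe x, this]; simp)
    · rintro rfl; simp
  · intro c x
    show n' (inc (c • x)) = ‖c‖ * n' (inc x)
    rw [map_smul]
    exact hn'.2.1 c (inc x)
  · intro x y
    show n' (inc (x + y)) ≤ n' (inc x) + n' (inc y)
    rw [map_add]
    exact hn'.2.2 (inc x) (inc y)
  · -- EmbedsContinuously
    obtain ⟨α, hα, h⟩ := hci'.1
    exact ⟨α, hα, fun ξ => by rw [← hcoe ξ]; exact h (inc ξ)⟩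
  · -- compat sequences
    intro ξ h1 h2
    refine hci'.2 (fun k => inc (ξ k)) ?_ ?_
    · simpa [hcoe] using h1
    · intro ε hε
      obtain ⟨N, hN⟩ := h2 ε hε
      exact ⟨N, fun p q hp hq => by rw [← map_sub]; exact hN p q hp hq⟩
  · -- CompletionIsReflexiveBanach
    obtain ⟨M, hMsurj⟩ := hrb'
    letI := M.instGroup; letI := M.instSpace; letI := M.instComplete
    set j0 : ↥D →ₗ[ℂ] M.E := M.j ∘ₗ inc with hj0
    set S : Submodule ℂ M.E := (LinearMap.range j0).topologicalClosure with hS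
    have hSc : IsClosed (S : Set M.E) := Submodule.isClosed_topologicalClosure _
    haveI : CompleteSpace ↥S := hSc.completeSpace_coe
    have hmem : ∀ ξ : ↥D, j0 ξ ∈ S :=
      fun ξ => Submodule.le_topologicalClosure _ ⟨ξ, rfl⟩
    set j : ↥D →ₗ[ℂ] ↥S := j0.codRestrict S hmem with hj
    have himg : Subtype.val '' Set.range ⇑j = (LinearMap.range j0 : Set M.E) := by
      ext y
      constructor
      · rintro ⟨w, ⟨ξ, rfl⟩, rfl⟩; exact ⟨ξ, rfl⟩
      · rintro ⟨ξ, rfl⟩; exact ⟨j ξ, ⟨ξ, rfl⟩, rfl⟩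
    refine ⟨{ E := ↥S, j := j,
              isometry := fun x => by
                have : ‖j x‖ = ‖j0 x‖ := rfl
                rw [this]; exact M.isometry (inc x)
              dense := ?_
              reflexive := reflexive_closedSubspace M.reflexive S hSc }⟩
    intro z
    rw [closure_subtype, himg]
    rw [← Submodule.topologicalClosure_coe]
    exact z.2
  · -- BoundedOn
    obtain ⟨β, hβ, h⟩ := hb'
    exact ⟨β, hβ, fun ξ η => by rw [← hrest ξ η]; exact h (inc ξ) (inc η)⟩


theorem isQClosable_iff_exists_qclosed_extension {H : Type} [NormedAddCommGroup H]
    [InnerProductSpace ℂ H] [CompleteSpace H]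
    (D : Submodule ℂ H) (hD : Dense (D : Set H)) (Ω : ↥D → ↥D → ℂ) (hsesq : IsSesq Ω) :
    (∃ n : ↥D → ℝ, IsQClosable D Ω n) ↔
      ∃ (D' : Submodule ℂ H) (hle : D ≤ D') (Ω' : ↥D' → ↥D' → ℂ) (n' : ↥D' → ℝ),
        IsSesq Ω' ∧
        (∀ ξ η : ↥D, Ω' (Submodule.inclusion hle ξ) (Submodule.inclusion hle η) = Ω ξ η) ∧
        IsQClosed D' Ω' n' := by
  constructor
  · rintro ⟨n, h⟩
    exact forward_dir D Ω hsesq n h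
  · rintro ⟨D', hle, Ω', n', hsesq', hrest, hQ⟩
    exact backward_dir D Ω D' hle Ω' n' hrest hQ

end Paper
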